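/- Suppose reals D > 0 and x₀, x₁ satisfy: x₀ minimizes |D - 2x| over a set containing 0 and x₀, x₁ minimizes |D - 2x₀ - 2x| over a set containing 0 and x₁, with D - 2x₀ ≥ 0 and D - 2x₀ - 2x₁ ≥ 0. Then |x₁| ≤ |x₀|. -/
import Mathlib

/-- case 1 of Lemma 3: two consecutive transfers with the
difference remaining nonnegative satisfy |x₁| ≤ |x₀|. -/
theorem stmt5 (D x₀ x₁ : ℝ) (hD : 0 < D)
    (h₀l : 0 ≤ x₀) (h₀u : x₀ ≤ D)
    (h₁l : 0 ≤ x₁) (h₁u : x₁ ≤ D - 2 * x₀)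
    (hnn₀ : 0 ≤ D - 2 * x₀) (hnn₁ : 0 ≤ D - 2 * x₀ - 2 * x₁)
    (hpref : |D - 2 * x₀| ≤ |D - 2 * x₁|) :
    |x₁| ≤ |x₀| := by
  rw [abs_of_nonneg h₁l, abs_of_nonneg h₀l]
  rw [abs_of_nonneg hnn₀] at hpref
  rcases abs_cases (D - 2 * x₁) with ⟨h, _⟩ | ⟨h, _⟩ <;> rw [h] at hpref <;> linarith
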